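/- Let a, b, r, C₂ ∈ ℂ with a ≠ 0. Set Ī(t) = C₂·e^{-a·t}, X̄(t) = exp((r·C₂/a)·e^{-a·t}) and C₃ = exp(-r·C₂/a). Define δS(t) = C₃·X̄(t), δE(t) = r·C₂·C₃·e^{-b·t}·∫₀ᵗ e^{-(a-b)·τ}·X̄(τ) dτ, δI(t) = b·e^{-a·t}·∫₀ᵗ δE(τ)·e^{a·τ} dτ, δX(t) = -r·X̄(t)·∫₀ᵗ δI(τ) dτ, δY(t) = -(r·b/a)·∫₀ᵗ δE(τ) dτ, δZ(t) = -(r²·C₂·C₃/a)·∫₀ᵗ e^{-a·τ}·X̄(τ) dτ. Then (δS, δE, δI, δX, δY, δZ) is a solution of the variational equation δS' = -r·Ī(t)·δS, δE' = r·Ī(t)·δS - b·δE, δI' = b·δE - a·δI, δX' = -r·X̄(t)·δI - r·Ī(t)·δX, δY' = -(r·b/a)·δE, δZ' = -(r²/a)·Ī(t)·δS on ℝ, with initial value (δS(0), δE(0), δI(0), δX(0), δY(0), δZ(0)) = (1, 0, 0, 0, 0, 0). -/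

import Mathlib

open MeasureTheory

private lemma ftcC {f : ℝ → ℂ} (hf : Continuous f) (t : ℝ) :
    HasDerivAt (fun u => ∫ τ in (0:ℝ)..u, f τ) (f t) t :=
  intervalIntegral.integral_hasDerivAt_right (hf.intervalIntegrable _ _)
    (hf.stronglyMeasurableAtFilter _ _) hf.continuousAt

private lemma ftcC_cont {f : ℝ → ℂ} (hf : Continuous f) :
    Continuous (fun u => ∫ τ in (0:ℝ)..u, f τ) :=
  Differentiable.continuous (fun t => (ftcC hf t).differentiableAt)

private lemma hexp (c : ℂ) (t : ℝ) :
    HasDerivAt (fun u : ℝ => Complex.exp (c * u)) (c * Complex.exp (c * t)) t := by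
  have h : HasDerivAt (fun u : ℝ => c * (u : ℂ)) c t := by
    simpa using (Complex.ofRealCLM.hasDerivAt (x := t)).const_mul c
  simpa [mul_comm] using h.cexp
/-- `Ī(t) = C₂·e^{-a t}`. -/
noncomputable def Ibar (a C₂ : ℂ) (t : ℝ) : ℂ := C₂ * Complex.exp (-a * t)

/-- `X̄(t) = exp((r C₂ / a)·e^{-a t})`. -/
noncomputable def Xbar (a r C₂ : ℂ) (t : ℝ) : ℂ :=
  Complex.exp (r * C₂ / a * Complex.exp (-a * t))

/-- `C₃ = exp(-r C₂ / a)`. -/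
noncomputable def C₃const (a r C₂ : ℂ) : ℂ := Complex.exp (-(r * C₂) / a)

/-- `δS(t) = C₃ X̄(t)`. -/
noncomputable def dS (a r C₂ : ℂ) (t : ℝ) : ℂ := C₃const a r C₂ * Xbar a r C₂ t

/-- `δE(t) = r C₂ C₃ e^{-b t} ∫₀ᵗ e^{-(a-b)τ} X̄(τ) dτ`. -/
noncomputable def dE (a b r C₂ : ℂ) (t : ℝ) : ℂ :=
  r * C₂ * C₃const a r C₂ * Complex.exp (-b * t) *
    ∫ τ in (0 : ℝ)..t, Complex.exp (-(a - b) * τ) * Xbar a r C₂ τ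

/-- `δI(t) = b e^{-a t} ∫₀ᵗ δE(τ) e^{a τ} dτ`. -/
noncomputable def dI (a b r C₂ : ℂ) (t : ℝ) : ℂ :=
  b * Complex.exp (-a * t) * ∫ τ in (0 : ℝ)..t, dE a b r C₂ τ * Complex.exp (a * τ)

/-- `δX(t) = -r X̄(t) ∫₀ᵗ δI(τ) dτ`. -/
noncomputable def dX (a b r C₂ : ℂ) (t : ℝ) : ℂ :=
  -r * Xbar a r C₂ t * ∫ τ in (0 : ℝ)..t, dI a b r C₂ τ

/-- `δY(t) = -(r b / a) ∫₀ᵗ δE(τ) dτ`. -/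
noncomputable def dY (a b r C₂ : ℂ) (t : ℝ) : ℂ :=
  -(r * b / a) * ∫ τ in (0 : ℝ)..t, dE a b r C₂ τ

/-- `δZ(t) = -(r² C₂ C₃ / a) ∫₀ᵗ e^{-a τ} X̄(τ) dτ`. -/
noncomputable def dZ (a r C₂ : ℂ) (t : ℝ) : ℂ :=
  -(r ^ 2 * C₂ * C₃const a r C₂ / a) *
    ∫ τ in (0 : ℝ)..t, Complex.exp (-a * τ) * Xbar a r C₂ τ

private lemma hXbar (a r C₂ : ℂ) (ha : a ≠ 0) (t : ℝ) :
    HasDerivAt (Xbar a r C₂) (-r * Ibar a C₂ t * Xbar a r C₂ t) t := by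
  have h := (((hexp (-a) t)).const_mul (r * C₂ / a)).cexp
  refine h.congr_deriv ?_
  unfold Xbar Ibar
  field_simp

private lemma contXbar (a r C₂ : ℂ) : Continuous (Xbar a r C₂) := by
  unfold Xbar; fun_prop

theorem variational_solution_one (a b r C₂ : ℂ) (ha : a ≠ 0) :
    (∀ t : ℝ,
      HasDerivAt (dS a r C₂) (-r * Ibar a C₂ t * dS a r C₂ t) t ∧
      HasDerivAt (dE a b r C₂) (r * Ibar a C₂ t * dS a r C₂ t - b * dE a b r C₂ t) t ∧
      HasDerivAt (dI a b r C₂) (b * dE a b r C₂ t - a * dI a b r C₂ t) t ∧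
      HasDerivAt (dX a b r C₂)
        (-r * Xbar a r C₂ t * dI a b r C₂ t - r * Ibar a C₂ t * dX a b r C₂ t) t ∧
      HasDerivAt (dY a b r C₂) (-(r * b / a) * dE a b r C₂ t) t ∧
      HasDerivAt (dZ a r C₂) (-(r ^ 2 / a) * Ibar a C₂ t * dS a r C₂ t) t) ∧
    dS a r C₂ 0 = 1 ∧ dE a b r C₂ 0 = 0 ∧ dI a b r C₂ 0 = 0 ∧
    dX a b r C₂ 0 = 0 ∧ dY a b r C₂ 0 = 0 ∧ dZ a r C₂ 0 = 0 := by
  have contf : Continuous (fun τ : ℝ => Complex.exp (-(a - b) * τ) * Xbar a r C₂ τ) := by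
    have := contXbar a r C₂; fun_prop
  have contE : Continuous (dE a b r C₂) := by
    unfold dE
    exact (continuous_const.mul (by fun_prop)).mul (ftcC_cont contf)
  have contg : Continuous (fun τ : ℝ => dE a b r C₂ τ * Complex.exp (a * τ)) := by
    exact contE.mul (by fun_prop)
  have contI : Continuous (dI a b r C₂) := by
    unfold dI
    exact (continuous_const.mul (by fun_prop)).mul (ftcC_cont contg)
  have contz : Continuous (fun τ : ℝ => Complex.exp (-a * τ) * Xbar a r C₂ τ) := by
    have := contXbar a r C₂; fun_prop
  refine ⟨fun t => ?_, ?_, ?_, ?_, ?_, ?_, ?_⟩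
  · have hS : HasDerivAt (dS a r C₂) (-r * Ibar a C₂ t * dS a r C₂ t) t := by
      have h := (hXbar a r C₂ ha t).const_mul (C₃const a r C₂)
      unfold dS
      refine h.congr_deriv ?_
      ring
    have keyE : Complex.exp (-b * (t:ℂ)) * Complex.exp (-(a - b) * t) = Complex.exp (-a * t) := by
      rw [← Complex.exp_add]; ring_nf
    have hE : HasDerivAt (dE a b r C₂)
        (r * Ibar a C₂ t * dS a r C₂ t - b * dE a b r C₂ t) t := by
      have h := ((hexp (-b) t).const_mul (r * C₂ * C₃const a r C₂)).mul (ftcC contf t)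
      unfold dE
      refine h.congr_deriv (Eq.symm ?_)
      unfold Ibar dS
      linear_combination (-(r * C₂ * C₃const a r C₂ * Xbar a r C₂ t)) * keyE
    have keyI : Complex.exp (-a * (t:ℂ)) * Complex.exp (a * t) = 1 := by
      rw [← Complex.exp_add]; ring_nf; exact Complex.exp_zero
    have hI : HasDerivAt (dI a b r C₂) (b * dE a b r C₂ t - a * dI a b r C₂ t) t := by
      have h := ((hexp (-a) t).const_mul b).mul (ftcC contg t)
      unfold dI
      refine h.congr_deriv (Eq.symm ?_)
      linear_combination (-(b * dE a b r C₂ t)) * keyI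
    have hX : HasDerivAt (dX a b r C₂)
        (-r * Xbar a r C₂ t * dI a b r C₂ t - r * Ibar a C₂ t * dX a b r C₂ t) t := by
      have h := ((hXbar a r C₂ ha t).const_mul (-r)).mul (ftcC contI t)
      unfold dX
      refine h.congr_deriv (Eq.symm ?_)
      ring
    have hY : HasDerivAt (dY a b r C₂) (-(r * b / a) * dE a b r C₂ t) t := by
      have h := (ftcC contE t).const_mul (-(r * b / a))
      unfold dY
      exact h
    have hZ : HasDerivAt (dZ a r C₂) (-(r ^ 2 / a) * Ibar a C₂ t * dS a r C₂ t) t := by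
      have h := (ftcC contz t).const_mul (-(r ^ 2 * C₂ * C₃const a r C₂ / a))
      unfold dZ
      refine h.congr_deriv (Eq.symm ?_)
      unfold Ibar dS
      ring
    exact ⟨hS, hE, hI, hX, hY, hZ⟩
  · unfold dS Xbar C₃const
    rw [← Complex.exp_add]
    norm_num
    rw [neg_div, neg_add_cancel, Complex.exp_zero]
  · simp [dE]
  · simp [dI]
  · simp [dX]
  · simp [dY]
  · simp [dZ]
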